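/- Let (ξ_i, 𝔉_i) be square-integrable martingale differences, S_n = Σ ξ_i, and B_n(0) = Σ (ξ_i⁺)² + Σ E[(ξ_i⁻)² | 𝔉_{i-1}], where ξ⁺ = max(ξ,0) and ξ⁻ = max(-ξ,0). Then for all x > 0 and p > 1, P(S_n ≥ x B_n(0)) ≤ (E[exp{-(p-1)(x²/2) B_n(0)}])^{1/p}. -/

import Mathlib

open MeasureTheory Real Finset
set_option linter.unusedSectionVars false
set_option linter.unusedVariables false
set_option maxHeartbeats 1000000

lemma aux_one_add_mul_exp_neg_le (u : ℝ) : (1 + u) * Real.exp (-u) ≤ 1 := by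
  have h1 := Real.add_one_le_exp u
  have h2 : (0:ℝ) < Real.exp (-u) := Real.exp_pos _
  have h3 : Real.exp u * Real.exp (-u) = 1 := by
    rw [← Real.exp_add]; simp
  nlinarith [mul_le_mul_of_nonneg_right h1 h2.le]

lemma aux_le_half (t : ℝ) : t - (max t 0)^2/2 ≤ 1/2 := by
  rcases le_or_gt t 0 with h | h
  · rw [max_eq_right h]; nlinarith
  · rw [max_eq_left h.le]; nlinarith [sq_nonneg (t-1)]

lemma aux_exp_nonpos (t : ℝ) (ht : t ≤ 0) : Real.exp t ≤ 1 + t + t^2/2 := by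
  have hmono : AntitoneOn (fun s : ℝ => 1 + s + s^2/2 - Real.exp s) (Set.Iic 0) := by
    have hd : ∀ s : ℝ, HasDerivAt (fun s : ℝ => 1 + s + s^2/2 - Real.exp s)
        (1 + s - Real.exp s) s := by
      intro s
      have h1 : HasDerivAt (fun s : ℝ => 1 + s + s^2/2) (1 + s) s := by
        have : HasDerivAt (fun s : ℝ => 1 + s + s^2/2) (0 + 1 + (2 * s^1 * 1)/2) s := by
          exact ((hasDerivAt_const s (1:ℝ)).add (hasDerivAt_id s)).add
            (((hasDerivAt_id s).pow 2).div_const 2)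
        convert this using 1; norm_num
      exact h1.sub (Real.hasDerivAt_exp s)
    apply antitoneOn_of_deriv_nonpos (convex_Iic 0)
    · exact ((continuous_const.add continuous_id).add
        ((continuous_pow 2).div_const 2)).sub Real.continuous_exp |>.continuousOn
    · intro s _
      exact (hd s).differentiableAt.differentiableWithinAt
    · intro s _
      rw [(hd s).deriv]
      nlinarith [Real.add_one_le_exp s]
  have := hmono ht Set.self_mem_Iic ht
  simp at this
  linarith

lemma aux_exp_nonneg (t : ℝ) (ht : 0 ≤ t) : Real.exp (t - t^2/2) ≤ 1 + t := by
  have hmono : MonotoneOn (fun s : ℝ => (1 + s) * Real.exp (s^2/2 - s)) (Set.Ici 0) := by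
    have hd : ∀ s : ℝ, HasDerivAt (fun s : ℝ => (1 + s) * Real.exp (s^2/2 - s))
        (Real.exp (s^2/2 - s) + (1 + s) * ((s - 1) * Real.exp (s^2/2 - s))) s := by
      intro s
      have h1 : HasDerivAt (fun s : ℝ => s^2/2 - s) (s - 1) s := by
        have : HasDerivAt (fun s : ℝ => s^2/2 - s) ((2 * s^1 * 1)/2 - 1) s :=
          (((hasDerivAt_id s).pow 2).div_const 2).sub (hasDerivAt_id s)
        convert this using 1; simp
      have h2 : HasDerivAt (fun s : ℝ => Real.exp (s^2/2 - s)) ((s-1) * Real.exp (s^2/2 - s)) s := by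
        have := h1.exp
        convert this using 1; ring
      have h3 : HasDerivAt (fun s : ℝ => 1 + s) 1 s := by
        have := (hasDerivAt_const s (1:ℝ)).add (hasDerivAt_id s); rw [zero_add] at this; exact this
      have := h3.mul h2; rw [one_mul] at this; exact this
    apply monotoneOn_of_deriv_nonneg (convex_Ici 0)
    · exact ((continuous_const.add continuous_id).mul
        (Real.continuous_exp.comp ((continuous_pow 2).div_const 2 |>.sub continuous_id))).continuousOn
    · intro s hs
      exact (hd s).differentiableAt.differentiableWithinAt
    · intro s hs
      rw [(hd s).deriv]
      have hs' : 0 ≤ s := le_of_lt (by simpa using hs)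
      nlinarith [Real.exp_pos (s^2/2 - s)]
  have h0 := hmono Set.self_mem_Ici ht ht
  simp at h0
  have hpos : 0 < Real.exp (t^2/2 - t) := Real.exp_pos _
  have key : 1 ≤ (1 + t) * Real.exp (t^2/2 - t) := le_trans (by norm_num) h0
  have : Real.exp (t - t^2/2) * Real.exp (t^2/2 - t) = 1 := by
    rw [← Real.exp_add]; simp
  nlinarith

lemma aux_exp_le (t : ℝ) :
    Real.exp (t - (max t 0)^2/2) ≤ 1 + t + (max (-t) 0)^2/2 := by
  rcases le_or_gt t 0 with h | h
  · rw [max_eq_right h, max_eq_left (by linarith)]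
    have := aux_exp_nonpos t h
    calc Real.exp (t - 0^2/2) = Real.exp t := by norm_num
    _ ≤ 1 + t + t^2/2 := this
    _ = 1 + t + (-t)^2/2 := by ring
  · rw [max_eq_left h.le, max_eq_right (by linarith)]
    have := aux_exp_nonneg t h.le
    calc Real.exp (t - t^2/2) ≤ 1 + t := this
    _ ≤ 1 + t + 0^2/2 := by norm_num


section core
variable {Ω : Type*} {m : MeasurableSpace Ω} {μ : Measure Ω} [IsProbabilityMeasure μ]
  (𝔉 : ℕ → MeasurableSpace Ω) (ξ : ℕ → Ω → ℝ) (x : ℝ)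

noncomputable def giF (μ : Measure Ω) (i : ℕ) : Ω → ℝ :=
  μ[fun ω' => (max (-(ξ i ω')) 0) ^ 2 | 𝔉 (i - 1)]

noncomputable def phiF (μ : Measure Ω) (i : ℕ) (ω : Ω) : ℝ :=
  x * ξ i ω - x^2/2 * (max (ξ i ω) 0)^2 - x^2/2 * giF 𝔉 ξ μ i ω

variable {𝔉 ξ x}
variable (hle : ∀ i, 𝔉 i ≤ m) (hmono : Monotone 𝔉)
  (hadp : ∀ i, StronglyMeasurable[𝔉 i] (ξ i))
  (hsq : ∀ i, Integrable (fun ω => (ξ i ω) ^ 2) μ)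

section meas
include hmono hadp

lemma phiF_sm {i n : ℕ} (h1 : 1 ≤ i) (h2 : i ≤ n) :
    StronglyMeasurable[𝔉 n] (phiF 𝔉 ξ x μ i) := by
  have hxi : StronglyMeasurable[𝔉 n] (ξ i) := (hadp i).mono (hmono h2)
  have hgi : StronglyMeasurable[𝔉 n] (giF 𝔉 ξ μ i) :=
    stronglyMeasurable_condExp.mono (hmono (le_trans (Nat.sub_le i 1) h2))
  have hmax : StronglyMeasurable[𝔉 n] (fun ω => max (ξ i ω) 0) :=
    (hxi.measurable.max measurable_const).stronglyMeasurable
  exact ((stronglyMeasurable_const.mul hxi).sub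
      (stronglyMeasurable_const.mul (hmax.pow 2))).sub
    (stronglyMeasurable_const.mul hgi)

lemma VF_sm (n : ℕ) :
    StronglyMeasurable[𝔉 n] (fun ω => Real.exp (∑ i ∈ Finset.Icc 1 n, phiF 𝔉 ξ x μ i ω)) := by
  refine Real.continuous_exp.comp_stronglyMeasurable ?_
  refine Finset.stronglyMeasurable_fun_sum _ fun i hi => ?_
  rw [Finset.mem_Icc] at hi
  exact phiF_sm hmono hadp hi.1 hi.2

end meas

lemma giF_nonneg (i : ℕ) : 0 ≤ᵐ[μ] giF 𝔉 ξ μ i :=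
  condExp_nonneg (Filter.Eventually.of_forall fun ω => by positivity)

lemma phiF_le_half (hx : 0 < x) (i : ℕ) : ∀ᵐ ω ∂μ, phiF 𝔉 ξ x μ i ω ≤ 1/2 := by
  filter_upwards [giF_nonneg (𝔉 := 𝔉) (ξ := ξ) (μ := μ) i] with ω hg
  have key : x * ξ i ω - x^2/2 * (max (ξ i ω) 0)^2 ≤ 1/2 := by
    have h1 : x * max (ξ i ω) 0 = max (x * ξ i ω) 0 := by
      rw [mul_max_of_nonneg _ _ hx.le, mul_zero]
    have := aux_le_half (x * ξ i ω)
    calc x * ξ i ω - x^2/2 * (max (ξ i ω) 0)^2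
        = x * ξ i ω - (max (x * ξ i ω) 0)^2/2 := by rw [← h1]; ring
      _ ≤ 1/2 := this
  simp only [Pi.zero_apply] at hg
  simp only [phiF]
  nlinarith [mul_nonneg (by positivity : (0:ℝ) ≤ x^2/2) hg]

include hmono hadp in
lemma sumphi_sm (n : ℕ) :
    StronglyMeasurable[𝔉 n] (fun ω => ∑ i ∈ Finset.Icc 1 n, phiF 𝔉 ξ x μ i ω) := by
  refine Finset.stronglyMeasurable_fun_sum _ fun i hi => ?_
  rw [Finset.mem_Icc] at hi
  exact phiF_sm hmono hadp hi.1 hi.2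

lemma VF_bound (hx : 0 < x) (n : ℕ) :
    ∀ᵐ ω ∂μ, Real.exp (∑ i ∈ Finset.Icc 1 n, phiF 𝔉 ξ x μ i ω) ≤ Real.exp ((n : ℝ) * (1/2)) := by
  have h : ∀ᵐ ω ∂μ, ∀ i, phiF 𝔉 ξ x μ i ω ≤ 1/2 := ae_all_iff.2 (phiF_le_half hx)
  filter_upwards [h] with ω hω
  rw [Real.exp_le_exp]
  calc ∑ i ∈ Finset.Icc 1 n, phiF 𝔉 ξ x μ i ω ≤ ∑ _i ∈ Finset.Icc 1 n, (1/2 : ℝ) :=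
        Finset.sum_le_sum fun i _ => hω i
    _ = (n : ℝ) * (1/2) := by simp [Finset.sum_const, Nat.card_Icc]

include hle hmono hadp in
lemma VF_int (hx : 0 < x) (n : ℕ) :
    Integrable (fun ω => Real.exp (∑ i ∈ Finset.Icc 1 n, phiF 𝔉 ξ x μ i ω)) μ := by
  refine Integrable.mono' (integrable_const (Real.exp ((n : ℝ) * (1/2))))
    ((Real.continuous_exp.comp_stronglyMeasurable
      ((sumphi_sm hmono hadp n).mono (hle n))).aestronglyMeasurable) ?_
  filter_upwards [VF_bound hx n] with ω hω
  rwa [Real.norm_eq_abs, abs_of_pos (Real.exp_pos _)]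

include hle hmono hadp hsq in
lemma VF_integral_le_one (hx : 0 < x)
    (hmart : ∀ i : ℕ, 1 ≤ i → μ[ξ i | 𝔉 (i - 1)] =ᵐ[μ] 0) (n : ℕ) :
    ∫ ω, Real.exp (∑ i ∈ Finset.Icc 1 n, phiF 𝔉 ξ x μ i ω) ∂μ ≤ 1 := by
  induction n with
  | zero => simp
  | succ n ih =>
    set g : Ω → ℝ := giF 𝔉 ξ μ (n+1) with hg_def
    set W : Ω → ℝ :=
      fun ω => Real.exp ((∑ i ∈ Finset.Icc 1 n, phiF 𝔉 ξ x μ i ω) - x^2/2 * g ω) with hW_def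
    set h : Ω → ℝ :=
      fun ω => Real.exp (x * ξ (n+1) ω - x^2/2 * (max (ξ (n+1) ω) 0)^2) with hh_def
    have hWh : ∀ ω, W ω * h ω =
        Real.exp (∑ i ∈ Finset.Icc 1 (n+1), phiF 𝔉 ξ x μ i ω) := by
      intro ω
      rw [Finset.sum_Icc_succ_top (by omega : 1 ≤ n + 1), hW_def, hh_def, ← Real.exp_add]
      congr 1
      show _ = _ + phiF 𝔉 ξ x μ (n+1) ω
      simp only [phiF, hg_def]
      ring
    have hg_sm : StronglyMeasurable[𝔉 n] g := stronglyMeasurable_condExp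
    have hW_sm : StronglyMeasurable[𝔉 n] W :=
      Real.continuous_exp.comp_stronglyMeasurable
        ((sumphi_sm hmono hadp n).sub (stronglyMeasurable_const.mul hg_sm))
    have hxm : StronglyMeasurable[m] (ξ (n+1)) := (hadp (n+1)).mono (hle (n+1))
    have hh_sm : StronglyMeasurable[m] h :=
      Real.continuous_exp.comp_stronglyMeasurable
        ((stronglyMeasurable_const.mul hxm).sub (stronglyMeasurable_const.mul
          (((hxm.measurable.max measurable_const).stronglyMeasurable).pow 2)))
    have hh_int : Integrable h μ := by
      refine Integrable.mono' (integrable_const (Real.exp (1/2)))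
        hh_sm.aestronglyMeasurable (Filter.Eventually.of_forall fun ω => ?_)
      rw [Real.norm_eq_abs, abs_of_pos (Real.exp_pos _), Real.exp_le_exp]
      have e1 : max (x * ξ (n+1) ω) 0 = x * max (ξ (n+1) ω) 0 := by
        rw [mul_max_of_nonneg _ _ hx.le, mul_zero]
      have := aux_le_half (x * ξ (n+1) ω)
      rw [e1] at this
      nlinarith
    have hWh_int : Integrable (W * h) μ := by
      have : (W * h) = fun ω => Real.exp (∑ i ∈ Finset.Icc 1 (n+1), phiF 𝔉 ξ x μ i ω) :=
        funext hWh
      rw [this]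
      exact VF_int hle hmono hadp hx (n+1)
    -- the comparison function q
    set nsq : Ω → ℝ := fun ω => (max (-(ξ (n+1) ω)) 0)^2 with hnsq_def
    have hξ_int : Integrable (ξ (n+1)) μ := by
      refine Integrable.mono' (((integrable_const (1:ℝ)).add (hsq (n+1))).div_const 2)
        hxm.aestronglyMeasurable (Filter.Eventually.of_forall fun ω => ?_)
      simp only [Pi.add_apply, Pi.div_apply, Real.norm_eq_abs]
      rcases abs_cases (ξ (n+1) ω) with ⟨he, _⟩ | ⟨he, _⟩ <;> rw [he] <;>
        nlinarith [sq_nonneg (ξ (n+1) ω - 1), sq_nonneg (ξ (n+1) ω + 1)]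
    have hnsq_int : Integrable nsq μ := by
      refine Integrable.mono' (hsq (n+1))
        ((((hxm.measurable.neg.max measurable_const).stronglyMeasurable).pow 2).aestronglyMeasurable)
        (Filter.Eventually.of_forall fun ω => ?_)
      have hb : (max (-(ξ (n+1) ω)) 0)^2 ≤ (ξ (n+1) ω)^2 := by
        rcases le_total (-(ξ (n+1) ω)) 0 with hc | hc
        · rw [max_eq_right hc]; nlinarith [sq_nonneg (ξ (n+1) ω)]
        · rw [max_eq_left hc]; nlinarith
      have hn : ‖nsq ω‖ = (max (-(ξ (n+1) ω)) 0)^2 := by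
        rw [hnsq_def, Real.norm_eq_abs, abs_of_nonneg (by positivity)]
      rw [hn]
      exact hb
    set q : Ω → ℝ := (fun _ => (1:ℝ)) + x • ξ (n+1) + (x^2/2) • nsq with hq_def
    have hq_int : Integrable q μ :=
      ((integrable_const (1:ℝ)).add (hξ_int.smul x)).add (hnsq_int.smul (x^2/2))
    have h_le_q : h ≤ᵐ[μ] q := by
      refine Filter.Eventually.of_forall fun ω => ?_
      have e1 : max (x * ξ (n+1) ω) 0 = x * max (ξ (n+1) ω) 0 := by
        rw [mul_max_of_nonneg _ _ hx.le, mul_zero]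
      have e2 : max (-(x * ξ (n+1) ω)) 0 = x * max (-(ξ (n+1) ω)) 0 := by
        rw [mul_max_of_nonneg _ _ hx.le, mul_zero, mul_neg]
      have key := aux_exp_le (x * ξ (n+1) ω)
      rw [e1, e2] at key
      have lhs_eq : h ω = Real.exp (x * ξ (n+1) ω - (x * max (ξ (n+1) ω) 0)^2/2) := by
        simp only [hh_def]; congr 1; ring
      have rhs_eq : q ω = 1 + x * ξ (n+1) ω + (x * max (-(ξ (n+1) ω)) 0)^2/2 := by
        simp only [hq_def, Pi.add_apply, Pi.smul_apply, smul_eq_mul, hnsq_def]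
        ring
      rw [lhs_eq, rhs_eq]
      exact key
    have cond_mul : μ[W * h|𝔉 n] =ᵐ[μ] W * μ[h|𝔉 n] :=
      condExp_mul_of_stronglyMeasurable_left hW_sm hWh_int hh_int
    have cond_mono : μ[h|𝔉 n] ≤ᵐ[μ] μ[q|𝔉 n] := condExp_mono hh_int hq_int h_le_q
    have hmart' : μ[ξ (n+1)|𝔉 n] =ᵐ[μ] 0 := hmart (n+1) (by omega)
    have cond_q : μ[q|𝔉 n] =ᵐ[μ] fun ω => 1 + x^2/2 * g ω := by
      have c1 : μ[q|𝔉 n] =ᵐ[μ]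
          μ[(fun _ => (1:ℝ)) + x • ξ (n+1)|𝔉 n] + μ[(x^2/2) • nsq|𝔉 n] :=
        condExp_add ((integrable_const (1:ℝ)).add (hξ_int.smul x)) (hnsq_int.smul (x^2/2)) (𝔉 n)
      have c2 : μ[(fun _ => (1:ℝ)) + x • ξ (n+1)|𝔉 n] =ᵐ[μ]
          μ[(fun _ => (1:ℝ))|𝔉 n] + μ[x • ξ (n+1)|𝔉 n] :=
        condExp_add (integrable_const (1:ℝ)) (hξ_int.smul x) (𝔉 n)
      have c3 : μ[(fun _ => (1:ℝ))|𝔉 n] = fun _ => (1:ℝ) := condExp_const (hle n) 1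
      have c4 : μ[x • ξ (n+1)|𝔉 n] =ᵐ[μ] x • μ[ξ (n+1)|𝔉 n] := condExp_smul x (ξ (n+1)) (𝔉 n)
      have c5 : μ[(x^2/2) • nsq|𝔉 n] =ᵐ[μ] (x^2/2) • μ[nsq|𝔉 n] := condExp_smul (x^2/2) nsq (𝔉 n)
      have c6 : μ[nsq|𝔉 n] = g := rfl
      filter_upwards [c1, c2, c4, c5, hmart'] with ω h1 h2 h4 h5 hm
      simp only [Pi.add_apply] at h1 h2
      rw [h1, h2, h4, h5, c3, c6]
      simp only [Pi.smul_apply, smul_eq_mul, Pi.zero_apply] at hm ⊢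
      rw [hm]
      ring
    have final_ae : μ[W * h|𝔉 n] ≤ᵐ[μ]
        fun ω => Real.exp (∑ i ∈ Finset.Icc 1 n, phiF 𝔉 ξ x μ i ω) := by
      filter_upwards [cond_mul, cond_mono, cond_q] with ω h1 h2 h3
      rw [h1, Pi.mul_apply]
      have hW_nonneg : 0 ≤ W ω := (Real.exp_pos _).le
      calc W ω * (μ[h|𝔉 n]) ω ≤ W ω * (μ[q|𝔉 n]) ω := by
            exact mul_le_mul_of_nonneg_left h2 hW_nonneg
        _ = W ω * (1 + x^2/2 * g ω) := by rw [h3]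
        _ = Real.exp (∑ i ∈ Finset.Icc 1 n, phiF 𝔉 ξ x μ i ω) *
              ((1 + x^2/2 * g ω) * Real.exp (-(x^2/2 * g ω))) := by
            have hWsplit : W ω = Real.exp (∑ i ∈ Finset.Icc 1 n, phiF 𝔉 ξ x μ i ω) *
                Real.exp (-(x^2/2 * g ω)) := by
              simp only [hW_def]
              rw [← Real.exp_add]
              congr 1
            rw [hWsplit]
            ring
        _ ≤ Real.exp (∑ i ∈ Finset.Icc 1 n, phiF 𝔉 ξ x μ i ω) * 1 := by
            exact mul_le_mul_of_nonneg_left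
              (aux_one_add_mul_exp_neg_le (x^2/2 * g ω)) (Real.exp_pos _).le
        _ = Real.exp (∑ i ∈ Finset.Icc 1 n, phiF 𝔉 ξ x μ i ω) := mul_one _
    calc ∫ ω, Real.exp (∑ i ∈ Finset.Icc 1 (n+1), phiF 𝔉 ξ x μ i ω) ∂μ
        = ∫ ω, (W * h) ω ∂μ := by
          refine integral_congr_ae (Filter.Eventually.of_forall fun ω => ?_)
          rw [Pi.mul_apply, hWh]
      _ = ∫ ω, (μ[W * h|𝔉 n]) ω ∂μ := (integral_condExp (hle n)).symm
      _ ≤ ∫ ω, Real.exp (∑ i ∈ Finset.Icc 1 n, phiF 𝔉 ξ x μ i ω) ∂μ :=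
          integral_mono_ae integrable_condExp (VF_int hle hmono hadp hx n) final_ae
      _ ≤ 1 := ih

end core

theorem stmt_8 {Ω : Type*} {m : MeasurableSpace Ω} {μ : Measure Ω} [IsProbabilityMeasure μ]
    (𝔉 : ℕ → MeasurableSpace Ω) (hle : ∀ i, 𝔉 i ≤ m) (hmono : Monotone 𝔉)
    (ξ : ℕ → Ω → ℝ)
    (hadp : ∀ i, StronglyMeasurable[𝔉 i] (ξ i))
    (hsq : ∀ i, Integrable (fun ω => (ξ i ω) ^ 2) μ)
    (hmart : ∀ i : ℕ, 1 ≤ i → μ[ξ i | 𝔉 (i - 1)] =ᵐ[μ] 0)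
    (n : ℕ) (x : ℝ) (hx : 0 < x) (p : ℝ) (hp : 1 < p)
    (S B : Ω → ℝ)
    (hS : S = fun ω => ∑ i ∈ Finset.Icc 1 n, ξ i ω)
    (hB : B = fun ω =>
      (∑ i ∈ Finset.Icc 1 n, (max (ξ i ω) 0) ^ 2)
        + ∑ i ∈ Finset.Icc 1 n,
            (μ[fun ω' => (max (-(ξ i ω')) 0) ^ 2 | 𝔉 (i - 1)]) ω) :
    (μ {ω | x * B ω ≤ S ω}).toReal ≤
      (∫ ω, Real.exp (-(p - 1) * (x ^ 2 / 2) * B ω) ∂μ) ^ (1 / p) := by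
  have hp0 : (0:ℝ) < p := by linarith
  have hp1 : p - 1 ≠ 0 := by intro hc; linarith [sub_eq_zero.mp hc]
  have hpne : p ≠ 0 := ne_of_gt hp0
  set c : ℝ := (p - 1) / p with hc_def
  have hc_pos : 0 < c := div_pos (by linarith) hp0
  have hc_lt : c * (p / (p - 1)) = 1 := by rw [hc_def]; field_simp
  -- relate x*S - x^2/2*B with the sum of phiF
  have hxSB : ∀ ω, x * S ω - x^2/2 * B ω = ∑ i ∈ Finset.Icc 1 n, phiF 𝔉 ξ x μ i ω := by
    intro ω
    rw [hS, hB]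
    simp only [phiF, giF]
    rw [mul_add, Finset.mul_sum, Finset.mul_sum, Finset.mul_sum, ← Finset.sum_add_distrib,
      ← Finset.sum_sub_distrib]
    exact Finset.sum_congr rfl fun i _ => by ring
  set V : Ω → ℝ := fun ω => Real.exp (∑ i ∈ Finset.Icc 1 n, phiF 𝔉 ξ x μ i ω) with hV_def
  have hVint : Integrable V μ := VF_int hle hmono hadp hx n
  have hV1 : ∫ ω, V ω ∂μ ≤ 1 := VF_integral_le_one hle hmono hadp hsq hx hmart n
  -- measurability
  have hS_meas : StronglyMeasurable[m] S := by
    rw [hS]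
    exact Finset.stronglyMeasurable_fun_sum _ fun i _ => (hadp i).mono (hle i)
  have hB_meas : StronglyMeasurable[m] B := by
    rw [hB]
    refine StronglyMeasurable.add ?_ ?_
    · refine Finset.stronglyMeasurable_fun_sum _ fun i _ => ?_
      exact ((((hadp i).mono (hle i)).measurable.max measurable_const).stronglyMeasurable).pow 2
    · refine Finset.stronglyMeasurable_fun_sum _ fun i _ => ?_
      exact stronglyMeasurable_condExp.mono (hle (i-1))
  have hA : MeasurableSet {ω | x * B ω ≤ S ω} :=
    measurableSet_le (measurable_const.mul hB_meas.measurable) hS_meas.measurable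
  -- F and G
  set F : Ω → ℝ := fun ω => Real.exp (c * (x * S ω - x^2/2 * B ω)) with hF_def
  set G : Ω → ℝ := fun ω => Real.exp (-c * ((x^2/2) * B ω)) with hG_def
  have hF_sm : StronglyMeasurable[m] F :=
    Real.continuous_exp.comp_stronglyMeasurable
      (stronglyMeasurable_const.mul ((stronglyMeasurable_const.mul hS_meas).sub
        (stronglyMeasurable_const.mul hB_meas)))
  have hG_sm : StronglyMeasurable[m] G :=
    Real.continuous_exp.comp_stronglyMeasurable
      (stronglyMeasurable_const.mul (stronglyMeasurable_const.mul hB_meas))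
  -- bounds
  have hB_nonneg : ∀ᵐ ω ∂μ, 0 ≤ B ω := by
    have hg : ∀ᵐ ω ∂μ, ∀ i, 0 ≤ giF 𝔉 ξ μ i ω := by
      refine ae_all_iff.2 fun i => ?_
      filter_upwards [giF_nonneg (𝔉 := 𝔉) (ξ := ξ) (μ := μ) i] with ω h
      simpa using h
    filter_upwards [hg] with ω hω
    rw [hB]
    have h1 : (0:ℝ) ≤ ∑ i ∈ Finset.Icc 1 n, (max (ξ i ω) 0) ^ 2 :=
      Finset.sum_nonneg fun i _ => by positivity
    have h2 : (0:ℝ) ≤ ∑ i ∈ Finset.Icc 1 n,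
        (μ[fun ω' => (max (-(ξ i ω')) 0) ^ 2 | 𝔉 (i - 1)]) ω :=
      Finset.sum_nonneg fun i _ => hω i
    exact add_nonneg h1 h2
  have hF_bd : ∀ᵐ ω ∂μ, ‖F ω‖ ≤ Real.exp (c * ((n:ℝ) * (1/2))) := by
    have hb : ∀ᵐ ω ∂μ, ∀ i, phiF 𝔉 ξ x μ i ω ≤ 1/2 := ae_all_iff.2 (phiF_le_half hx)
    filter_upwards [hb] with ω hω
    simp only [hF_def, Real.norm_eq_abs, Real.abs_exp, Real.exp_le_exp]
    rw [hxSB]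
    refine mul_le_mul_of_nonneg_left ?_ hc_pos.le
    calc ∑ i ∈ Finset.Icc 1 n, phiF 𝔉 ξ x μ i ω ≤ ∑ _i ∈ Finset.Icc 1 n, (1/2:ℝ) :=
          Finset.sum_le_sum fun i _ => hω i
      _ = (n:ℝ) * (1/2) := by simp [Finset.sum_const, Nat.card_Icc]
  have hG_bd : ∀ᵐ ω ∂μ, ‖G ω‖ ≤ 1 := by
    filter_upwards [hB_nonneg] with ω hω
    simp only [hG_def, Real.norm_eq_abs, Real.abs_exp]
    refine Real.exp_le_one_iff.2 ?_
    have : 0 ≤ (x^2/2) * B ω := by positivity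
    nlinarith
  have hF_mem : ∀ r : ENNReal, MemLp F r μ := fun r =>
    (memLp_top_of_bound hF_sm.aestronglyMeasurable _ hF_bd).mono_exponent le_top
  have hG_mem : ∀ r : ENNReal, MemLp G r μ := fun r =>
    (memLp_top_of_bound hG_sm.aestronglyMeasurable _ hG_bd).mono_exponent le_top
  have hpq : Real.HolderConjugate (p / (p-1)) p := by
    exact (Real.HolderConjugate.conjExponent hp).symm
  -- pointwise indicator bound
  have hind : ∀ ω, Set.indicator {ω | x * B ω ≤ S ω} (1 : Ω → ℝ) ω ≤ F ω * G ω := by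
    intro ω
    have hFG : F ω * G ω = Real.exp (c * (x * S ω - x^2 * B ω)) := by
      simp only [hF_def, hG_def]
      rw [← Real.exp_add]
      congr 1
      ring
    by_cases hmem : ω ∈ {ω | x * B ω ≤ S ω}
    · rw [Set.indicator_of_mem hmem, Pi.one_apply, hFG]
      refine Real.one_le_exp ?_
      have hle' : x * B ω ≤ S ω := hmem
      have : x^2 * B ω ≤ x * S ω := by nlinarith
      nlinarith
    · rw [Set.indicator_of_notMem hmem]
      exact (mul_pos (Real.exp_pos _) (Real.exp_pos _)).le
  have hFG_int : Integrable (fun ω => F ω * G ω) μ := by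
    refine Integrable.mono' (integrable_const (Real.exp (c * ((n:ℝ) * (1/2))) * 1))
      (hF_sm.mul hG_sm).aestronglyMeasurable ?_
    filter_upwards [hF_bd, hG_bd] with ω h1 h2
    rw [Real.norm_eq_abs,
      abs_of_pos (show (0:ℝ) < F ω * G ω from mul_pos (Real.exp_pos _) (Real.exp_pos _))]
    calc F ω * G ω ≤ ‖F ω‖ * ‖G ω‖ := by
          rw [Real.norm_eq_abs, Real.norm_eq_abs,
            abs_of_pos (show (0:ℝ) < F ω from Real.exp_pos _),
            abs_of_pos (show (0:ℝ) < G ω from Real.exp_pos _)]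
      _ ≤ Real.exp (c * ((n:ℝ) * (1/2))) * 1 :=
          mul_le_mul h1 h2 (norm_nonneg _) (Real.exp_pos _).le
  have holder := integral_mul_le_Lp_mul_Lq_of_nonneg hpq
    (Filter.Eventually.of_forall fun ω => (Real.exp_pos _).le)
    (Filter.Eventually.of_forall fun ω => (Real.exp_pos _).le)
    (hF_mem _) (hG_mem _)
  -- identify ∫ F^{p/(p-1)} with ∫ V
  have hFpow : ∀ ω, F ω ^ (p/(p-1)) = V ω := by
    intro ω
    simp only [hF_def, hV_def]
    rw [← Real.exp_mul, ← hxSB]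
    congr 1
    rw [mul_comm (c * _) _, ← mul_assoc, mul_comm (p/(p-1)) c, hc_lt, one_mul]
  have hGpow : ∀ ω, G ω ^ p = Real.exp (-(p - 1) * (x ^ 2 / 2) * B ω) := by
    intro ω
    simp only [hG_def]
    rw [← Real.exp_mul]
    congr 1
    rw [hc_def]
    field_simp
  have hVle : (∫ ω, F ω ^ (p/(p-1)) ∂μ) ^ (1/(p/(p-1))) ≤ 1 := by
    refine Real.rpow_le_one (integral_nonneg fun ω =>
      Real.rpow_nonneg (show (0:ℝ) ≤ F ω from (Real.exp_pos _).le) _) ?_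
      (one_div_nonneg.2 (div_nonneg hp0.le (by linarith)))
    calc ∫ ω, F ω ^ (p/(p-1)) ∂μ = ∫ ω, V ω ∂μ := integral_congr_ae
          (Filter.Eventually.of_forall fun ω => hFpow ω)
      _ ≤ 1 := hV1
  calc (μ {ω | x * B ω ≤ S ω}).toReal
      = ∫ ω, Set.indicator {ω | x * B ω ≤ S ω} (1 : Ω → ℝ) ω ∂μ := by
        rw [integral_indicator_one hA]; rfl
    _ ≤ ∫ ω, F ω * G ω ∂μ := integral_mono_ae
        ((integrable_const (1:ℝ)).indicator hA) hFG_int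
        (Filter.Eventually.of_forall hind)
    _ ≤ (∫ ω, F ω ^ (p/(p-1)) ∂μ) ^ (1/(p/(p-1))) * (∫ ω, G ω ^ p ∂μ) ^ (1/p) := holder
    _ ≤ 1 * (∫ ω, G ω ^ p ∂μ) ^ (1/p) :=
        mul_le_mul_of_nonneg_right hVle
          (Real.rpow_nonneg (integral_nonneg fun ω =>
            Real.rpow_nonneg (show (0:ℝ) ≤ G ω from (Real.exp_pos _).le) _) _)
    _ = (∫ ω, Real.exp (-(p - 1) * (x ^ 2 / 2) * B ω) ∂μ) ^ (1 / p) := by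
        rw [one_mul]
        congr 1
        exact integral_congr_ae (Filter.Eventually.of_forall fun ω => hGpow ω)
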